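/- For every finite forest F = (V, E) (a simple graph with no cycles) and all elements v, x, y of a commutative ring, the subgraph counting polynomial satisfies H(F, v, x, y) = Σ_{W ⊆ V} v^{|W|} · x^{k(F[W])} · (x + y)^{|W| − k(F[W])}, where F[W] is the subgraph induced by W and k(F[W]) is its number of connected components. -/

import Mathlib

open Finset

/-- The edge set of a simple graph on a finite vertex type, as a `Finset`. -/
noncomputable def edgeFinset' {α : Type*} [Fintype α] (G : SimpleGraph α) :
    Finset (Sym2 α) :=
  (Set.toFinite G.edgeSet).toFinset

/-- The number of connected components of a graph. -/
noncomputable def ncomp {α : Type*} (G : SimpleGraph α) : ℕ :=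
  Nat.card G.ConnectedComponent

/-- The Potts model `Z(G, x, y) = Σ_{A ⊆ E} x^{c(V,A)} y^{|A|}`, where `c(V,A)` is the
number of connected components of the spanning subgraph `(V, A)`. -/
noncomputable def potts {α : Type*} [Fintype α] {R : Type*} [CommRing R]
    (G : SimpleGraph α) (x y : R) : R :=
  ∑ A ∈ (edgeFinset' G).powerset,
    x ^ ncomp (SimpleGraph.fromEdgeSet (A : Set (Sym2 α))) * y ^ A.card

/-- The subgraph counting polynomial
`H(G, v, x, y) = Σ_{(W,F), W ⊆ V, F ⊆ E(G[W])} v^{|W|} x^{c(W,F)} y^{|F|}`,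
where `c(W,F)` is the number of connected components of the graph `(W, F)`. -/
noncomputable def scp {α : Type*} [Fintype α] {R : Type*} [CommRing R]
    (G : SimpleGraph α) (v x y : R) : R :=
  ∑ W : Finset α, ∑ F ∈ (edgeFinset' (G.induce (W : Set α))).powerset,
    v ^ W.card * x ^ ncomp (SimpleGraph.fromEdgeSet (F : Set (Sym2 (W : Set α)))) * y ^ F.card

/-- The subgraph component polynomial `Q(G, v, x) = Σ_{W ⊆ V} v^{|W|} x^{k(G[W])}`. -/
noncomputable def subgraphCompPoly {α : Type*} [Fintype α] {R : Type*} [CommRing R]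
    (G : SimpleGraph α) (v x : R) : R :=
  ∑ W : Finset α, v ^ W.card * x ^ ncomp (G.induce (W : Set α))

/-- The number of bad monochromatic edges of a coloring `φ : α → Fin x` (colors `1, …, x`
identified with `Fin x` via `c ↦ c + 1`): edges all of whose vertices get the same color
`c ≤ y`, i.e. `(c : ℕ) < y`. -/
noncomputable def badCount {α : Type*} {x : ℕ} (G : SimpleGraph α) (y : ℕ)
    (φ : α → Fin x) : ℕ :=
  {e ∈ G.edgeSet | ∃ c : Fin x, (c : ℕ) < y ∧ ∀ w ∈ e, φ w = c}.ncard

/-- The number of monochromatic edges of a coloring `φ : α → Fin x`. -/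
noncomputable def monoCount {α : Type*} {x : ℕ} (G : SimpleGraph α)
    (φ : α → Fin x) : ℕ :=
  {e ∈ G.edgeSet | ∃ c : Fin x, ∀ w ∈ e, φ w = c}.ncard

/-- The bad coloring polynomial `χ̃(G, x, z) = Σ_{φ : V → {1,…,x}} z^{m(φ)}`, where `m(φ)`
is the number of monochromatic edges of `φ`. -/
noncomputable def badChrom {α : Type*} [Fintype α] [DecidableEq α] {R : Type*} [CommRing R]
    (G : SimpleGraph α) (x : ℕ) (z : R) : R :=
  ∑ φ : α → Fin x, z ^ monoCount G φ

/-- The trivariate chromatic polynomial `P̃(G, x, y, z) = Σ_{φ : V → {1,…,x}} z^{b(φ)}`,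
where `b(φ)` is the number of bad monochromatic edges of `φ` (monochromatic in a color
`c ≤ y`). -/
noncomputable def triChrom {α : Type*} [Fintype α] [DecidableEq α] {R : Type*} [CommRing R]
    (G : SimpleGraph α) (x y : ℕ) (z : R) : R :=
  ∑ φ : α → Fin x, z ^ badCount G y φ

/-- The subgraph counting polynomial as a polynomial with integer coefficients in the
variables `v = X 0`, `x = X 1`, `y = X 2`. -/
noncomputable def scpPoly {α : Type*} [Fintype α] (G : SimpleGraph α) :
    MvPolynomial (Fin 3) ℤ :=
  scp G (MvPolynomial.X 0) (MvPolynomial.X 1) (MvPolynomial.X 2)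

section AuxForScp
open SimpleGraph

lemma mem_edgeFinset' {α : Type*} [Fintype α] {G : SimpleGraph α} {e : Sym2 α} :
    e ∈ edgeFinset' G ↔ e ∈ G.edgeSet := Set.Finite.mem_toFinset _

lemma isAcyclic_of_le {α : Type*} {G H : SimpleGraph α} (h : G ≤ H)
    (hH : H.IsAcyclic) : G.IsAcyclic := by
  intro v p hp
  exact hH (p.map (Hom.ofLE h)) (hp.map (fun _ _ h => h))

lemma isAcyclic_induce {α : Type*} {G : SimpleGraph α} (hG : G.IsAcyclic) (s : Set α) :
    (G.induce s).IsAcyclic := by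
  intro v p hp
  exact hG (p.map (Embedding.induce s (G := G)).toHom) (hp.map (Embedding.induce s (G := G)).injective)

lemma ncomp_bot {α : Type*} [Fintype α] : ncomp (⊥ : SimpleGraph α) = Fintype.card α := by
  rw [ncomp, ← Nat.card_eq_fintype_card]
  refine (Nat.card_eq_of_bijective (⊥ : SimpleGraph α).connectedComponentMk ⟨?_, ?_⟩).symm
  · intro u v h
    exact reachable_bot.mp (SimpleGraph.ConnectedComponent.eq.mp h)
  · exact Quot.exists_rep

lemma reach_split {α : Type*} {G : SimpleGraph α} {a b : α} {u w : α}
    (p : G.Walk u w) :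
    (G.deleteEdges {s(a,b)}).Reachable u w ∨
    ((G.deleteEdges {s(a,b)}).Reachable u a ∧ (G.deleteEdges {s(a,b)}).Reachable b w) ∨
    ((G.deleteEdges {s(a,b)}).Reachable u b ∧ (G.deleteEdges {s(a,b)}).Reachable a w) := by
  set G' := G.deleteEdges {s(a,b)} with hG'
  induction p with
  | nil => exact Or.inl (Reachable.refl _)
  | @cons u x w h q ih =>
    by_cases he : s(u, x) = s(a, b)
    · rw [Sym2.eq_iff] at he
      rcases he with ⟨rfl, rfl⟩ | ⟨rfl, rfl⟩
      · rcases ih with h1 | ⟨h2, h3⟩ | ⟨h2, h3⟩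
        · exact Or.inr (Or.inl ⟨Reachable.refl _, h1⟩)
        · exact Or.inl (h2.symm.trans h3)
        · exact Or.inl h3
      · rcases ih with h1 | ⟨h2, h3⟩ | ⟨h2, h3⟩
        · exact Or.inr (Or.inr ⟨Reachable.refl _, h1⟩)
        · exact Or.inl h3
        · exact Or.inl (h2.symm.trans h3)
    · have hadj : G'.Adj u x := by
        rw [hG', deleteEdges_adj]
        exact ⟨h, by simpa using he⟩
      rcases ih with h1 | ⟨h2, h3⟩ | ⟨h2, h3⟩
      · exact Or.inl (hadj.reachable.trans h1)
      · exact Or.inr (Or.inl ⟨hadj.reachable.trans h2, h3⟩)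
      · exact Or.inr (Or.inr ⟨hadj.reachable.trans h2, h3⟩)

lemma ncomp_deleteEdge {α : Type*} [Fintype α] {G : SimpleGraph α} {a b : α}
    (hab : G.Adj a b) (hb : ¬ (G.deleteEdges {s(a,b)}).Reachable a b) :
    ncomp (G.deleteEdges {s(a,b)}) = ncomp G + 1 := by
  classical
  set G' := G.deleteEdges {s(a,b)} with hG'
  haveI : Fintype G'.ConnectedComponent := Fintype.ofFinite _
  haveI : Fintype G.ConnectedComponent := Fintype.ofFinite _
  set b0 : G'.ConnectedComponent := G'.connectedComponentMk b with hb0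
  have hfbij : Function.Bijective
      (fun c : {c : G'.ConnectedComponent // c ≠ b0} =>
        c.1.map (Hom.ofLE (deleteEdges_le _))) := by
    constructor
    · rintro ⟨c, hc⟩ ⟨c', hc'⟩ hcc
      obtain ⟨u, rfl⟩ := c.exists_rep
      obtain ⟨v, rfl⟩ := c'.exists_rep
      simp only [ConnectedComponent.map_mk, Hom.ofLE_apply] at hcc
      have hr : G.Reachable u v := SimpleGraph.ConnectedComponent.eq.mp hcc
      obtain ⟨p⟩ := hr
      rcases reach_split (a := a) (b := b) p with h1 | ⟨h2, h3⟩ | ⟨h2, h3⟩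
      · exact Subtype.ext (SimpleGraph.ConnectedComponent.eq.mpr h1)
      · exact absurd (SimpleGraph.ConnectedComponent.eq.mpr h3.symm) hc'
      · exact absurd (SimpleGraph.ConnectedComponent.eq.mpr h2) hc
    · intro c
      obtain ⟨x, rfl⟩ := c.exists_rep
      by_cases hx : G'.Reachable b x
      · refine ⟨⟨G'.connectedComponentMk a, ?_⟩, ?_⟩
        · intro h
          exact hb (SimpleGraph.ConnectedComponent.eq.mp h)
        · simp only [ConnectedComponent.map_mk, Hom.ofLE_apply]
          exact SimpleGraph.ConnectedComponent.eq.mpr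
            (hab.reachable.trans ((hx.mono (deleteEdges_le _))))
      · refine ⟨⟨G'.connectedComponentMk x, ?_⟩, rfl⟩
        intro h
        exact hx (SimpleGraph.ConnectedComponent.eq.mp h).symm
  have h1 : Nat.card {c : G'.ConnectedComponent // c ≠ b0} = ncomp G :=
    Nat.card_eq_of_bijective _ hfbij
  rw [Nat.card_eq_fintype_card] at h1
  have h2 : Fintype.card {c : G'.ConnectedComponent // c ≠ b0}
      = Fintype.card G'.ConnectedComponent - 1 := by
    rw [Fintype.card_subtype_compl, Fintype.card_subtype_eq]
  have h3 : 1 ≤ Fintype.card G'.ConnectedComponent :=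
    @Fintype.card_pos _ _ ⟨b0⟩
  rw [ncomp, Nat.card_eq_fintype_card]
  omega

lemma forest_count {α : Type*} [Fintype α] (n : ℕ) :
    ∀ (G : SimpleGraph α), G.IsAcyclic → (edgeFinset' G).card = n →
      (edgeFinset' G).card + ncomp G = Fintype.card α := by
  classical
  induction n with
  | zero =>
    intro G hG h0
    rw [Finset.card_eq_zero] at h0
    have : G.edgeSet = ∅ := by
      rw [← Set.Finite.coe_toFinset (Set.toFinite G.edgeSet)]
      rw [edgeFinset'] at h0
      rw [h0]; simp
    rw [edgeSet_eq_empty] at this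
    subst this
    simpa [h0] using ncomp_bot
  | succ n ih =>
    intro G hG hcard
    have hne : (edgeFinset' G).Nonempty := by
      rw [← Finset.card_pos, hcard]; omega
    obtain ⟨e, he⟩ := hne
    rw [mem_edgeFinset'] at he
    obtain ⟨a, b, hab, rfl⟩ : ∃ a b, G.Adj a b ∧ s(a, b) = e := by
      revert he
      refine Sym2.ind (fun a b he => ⟨a, b, he, rfl⟩) e
    set G' := G.deleteEdges {s(a,b)} with hG'
    have hle : G' ≤ G := deleteEdges_le _
    have hG'a : G'.IsAcyclic := isAcyclic_of_le hle hG
    have hedge : edgeFinset' G' = (edgeFinset' G).erase s(a,b) := by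
      ext e'
      simp only [mem_edgeFinset', Finset.mem_erase, mem_edgeFinset']
      rw [hG', edgeSet_deleteEdges]
      simp [and_comm]
    have hcard' : (edgeFinset' G').card = n := by
      rw [hedge, Finset.card_erase_of_mem (mem_edgeFinset'.mpr hab), hcard]
      omega
    have hbridge : ¬ G'.Reachable a b := by
      have := (isAcyclic_iff_forall_adj_isBridge.mp hG) hab
      exact isBridge_iff.mp this
    have := ih G' hG'a hcard'
    rw [hcard', ncomp_deleteEdge hab hbridge] at this
    omega

end AuxForScp

/-- For a forest `F`,
`H(F, v, x, y) = Σ_{W ⊆ V} v^{|W|} · x^{k(F[W])} · (x + y)^{|W| − k(F[W])}`. -/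
theorem scp_of_isAcyclic {V : Type*} [Fintype V] {R : Type*} [CommRing R]
    (F : SimpleGraph V) (hF : F.IsAcyclic) (v x y : R) :
    scp F v x y
      = ∑ W : Finset V, v ^ W.card * x ^ ncomp (F.induce (W : Set V)) *
          (x + y) ^ (W.card - ncomp (F.induce (W : Set V))) := by
    classical
  rw [scp]
  refine Finset.sum_congr rfl fun W _ => ?_
  set GW := F.induce (W : Set V) with hGW
  have hcardV : Fintype.card ↥(W : Set V) = W.card := by
    simp [Fintype.card_coe]
  have hGWa : GW.IsAcyclic := isAcyclic_induce hF _
  have hmk : (edgeFinset' GW).card + ncomp GW = W.card := by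
    rw [← hcardV]; exact forest_count _ GW hGWa rfl
  set E := edgeFinset' GW with hE
  set m := E.card with hm
  set k := ncomp GW with hk
  -- per-term component count
  have hterm : ∀ A ∈ E.powerset,
      v ^ W.card * x ^ ncomp (SimpleGraph.fromEdgeSet (A : Set (Sym2 (W : Set V)))) * y ^ A.card
      = v ^ W.card * (x ^ k * (x ^ (m - A.card) * y ^ A.card)) := by
    intro A hA
    rw [Finset.mem_powerset] at hA
    have hsub : (A : Set (Sym2 ↥(W : Set V))) ⊆ GW.edgeSet := by
      intro e he
      exact mem_edgeFinset'.mp (hA (by simpa using he))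
    have hle : SimpleGraph.fromEdgeSet (A : Set (Sym2 ↥(W : Set V))) ≤ GW := by
      have := SimpleGraph.fromEdgeSet_mono hsub
      rwa [SimpleGraph.fromEdgeSet_edgeSet] at this
    have hAa := isAcyclic_of_le hle hGWa
    have hedge : edgeFinset' (SimpleGraph.fromEdgeSet (A : Set (Sym2 ↥(W : Set V)))) = A := by
      ext e
      rw [mem_edgeFinset', SimpleGraph.edgeSet_fromEdgeSet]
      constructor
      · rintro ⟨he, -⟩; simpa using he
      · intro he
        exact ⟨by simpa using he, SimpleGraph.not_isDiag_of_mem_edgeSet GW (hsub he)⟩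
    have hcount := forest_count (A.card) (SimpleGraph.fromEdgeSet (A : Set (Sym2 ↥(W : Set V))))
        hAa (by rw [hedge])
    rw [hedge, hcardV] at hcount
    have hAm : A.card ≤ m := Finset.card_le_card hA
    have hncomp : ncomp (SimpleGraph.fromEdgeSet (A : Set (Sym2 ↥(W : Set V))))
        = k + (m - A.card) := by omega
    rw [hncomp, pow_add, mul_assoc, mul_assoc]
  rw [Finset.sum_congr rfl hterm, ← Finset.mul_sum, ← Finset.mul_sum]
  have hnk : W.card - k = m := by omega
  rw [hnk, mul_assoc]
  congr 1
  congr 1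
  have := Finset.prod_add (fun _ : Sym2 ↥(W : Set V) => y) (fun _ => x) E
  simp only [Finset.prod_const] at this
  rw [add_comm x y, hm, this]
  refine Finset.sum_congr rfl fun A hA => ?_
  rw [Finset.mem_powerset] at hA
  rw [Finset.card_sdiff_of_subset hA, mul_comm]
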